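/- No finite group whose order is divisible by at least two distinct primes and all of whose subgroups are indecomposable has a generalized quaternion group as Sylow 2-subgroup: if all subgroups of the finite group G are indecomposable and G is not a p-group, then the Sylow 2-subgroups of G are cyclic. -/

import Mathlib

universe u

/-- A group is *indecomposable* if whenever it is isomorphic to a direct
product `A × B` of groups, one of `A` or `B` is trivial. -/
def Indecomposable (G : Type u) [Group G] : Prop :=
  ∀ (A B : Type u) [Group A] [Group B], Nonempty (G ≃* A × B) →
    Subsingleton A ∨ Subsingleton B

open Subgroup

set_option linter.unusedSectionVars false
set_option maxHeartbeats 1600000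

section aux
variable {G : Type} [Group G] [Fintype G]

/-- Workhorse: two commuting nontrivial elements generating disjoint cyclic
subgroups give a decomposable subgroup. -/
lemma aux_W (hind : ∀ H : Subgroup G, Indecomposable H) {a b : G}
    (ha : a ≠ 1) (hb : b ≠ 1) (hab : Commute a b)
    (hdisj : ∀ w : G, w ∈ zpowers a → w ∈ zpowers b → w = 1) : False := by
  have hcomm : ∀ (x : ↥(zpowers a)) (y : ↥(zpowers b)),
      Commute ((zpowers a).subtype x) ((zpowers b).subtype y) := by
    rintro ⟨x, hx⟩ ⟨y, hy⟩
    obtain ⟨i, hi⟩ := mem_zpowers_iff.mp hx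
    obtain ⟨j, hj⟩ := mem_zpowers_iff.mp hy
    simp only [Subgroup.coe_subtype]
    rw [← hi, ← hj]
    exact hab.zpow_zpow i j
  set f : ↥(zpowers a) × ↥(zpowers b) →* G :=
    MonoidHom.noncommCoprod (zpowers a).subtype (zpowers b).subtype hcomm with hf
  have hinj : Function.Injective f := by
    rw [injective_iff_map_eq_one]
    rintro ⟨⟨x, hx⟩, ⟨y, hy⟩⟩ hxy
    have hxy' : x * y = 1 := hxy
    have hxb : x ∈ zpowers b := by
      have : x = y⁻¹ := eq_inv_of_mul_eq_one_left hxy'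
      rw [this]; exact inv_mem hy
    have hx1 : x = 1 := hdisj x hx hxb
    have hy1 : y = 1 := by rwa [hx1, one_mul] at hxy'
    simp [Prod.ext_iff, Subtype.ext_iff, hx1, hy1]
  have e : ↥(zpowers a) × ↥(zpowers b) ≃* ↥f.range := MonoidHom.ofInjective hinj
  rcases hind f.range _ _ ⟨e.symm⟩ with h | h
  · exact ha (by
      have := @Subsingleton.elim _ h (⟨a, mem_zpowers a⟩ : ↥(zpowers a)) 1
      exact congrArg Subtype.val this)
  · exact hb (by
      have := @Subsingleton.elim _ h (⟨b, mem_zpowers b⟩ : ↥(zpowers b)) 1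
      exact congrArg Subtype.val this)

lemma mem_zpowers_invol {t w : G} (ht : t * t = 1) (hw : w ∈ zpowers t) :
    w = 1 ∨ w = t := by
  obtain ⟨k, hk⟩ := mem_zpowers_iff.mp hw
  have ht2 : t ^ (2 : ℤ) = 1 := by
    rw [show (2:ℤ) = 1 + 1 by norm_num, zpow_add, zpow_one, ht]
  rcases Int.even_or_odd k with ⟨c, hc⟩ | ⟨c, hc⟩
  · left
    rw [← hk, hc, show c + c = 2 * c by ring, zpow_mul, ht2, one_zpow]
  · right
    rw [← hk, hc, zpow_add, zpow_one, zpow_mul, ht2, one_zpow, one_mul]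

lemma aux_two_invol (hind : ∀ H : Subgroup G, Indecomposable H) {t t' : G}
    (ht : t * t = 1) (ht' : t' * t' = 1) (h1 : t ≠ 1) (h1' : t' ≠ 1)
    (hne : t ≠ t') (hc : Commute t t') : False := by
  refine aux_W hind h1 h1' hc ?_
  intro w hw hw'
  rcases mem_zpowers_invol ht hw with rfl | rfl
  · rfl
  · rcases mem_zpowers_invol ht' hw' with h | h
    · exact h
    · exact absurd h hne

/-- The product of two nontrivial involutions has odd order. -/
lemma aux_core (hind : ∀ H : Subgroup G, Indecomposable H) {t t' : G}
    (ht : t * t = 1) (ht' : t' * t' = 1) (h1 : t ≠ 1) (h1' : t' ≠ 1) :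
    Odd (orderOf (t * t')) := by
  set c := t * t' with hc
  set n := orderOf c with hn
  have hn0 : n ≠ 0 := (orderOf_pos c).ne'
  rcases Nat.even_or_odd n with he | ho
  swap
  · exact ho
  exfalso
  obtain ⟨k, hk⟩ := he
  have hk0 : k ≠ 0 := by rintro rfl; simp at hk; exact hn0 hk
  have hkn : k < n := by omega
  have htinv : t⁻¹ = t := by
    rw [← mul_one t⁻¹, ← ht, ← mul_assoc, inv_mul_cancel, one_mul]
  have ht'inv : t'⁻¹ = t' := by
    rw [← mul_one t'⁻¹, ← ht', ← mul_assoc, inv_mul_cancel, one_mul]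
  have htct : t * c * t⁻¹ = c⁻¹ := by
    rw [hc, htinv, mul_inv_rev, ht'inv, htinv, ← mul_assoc, ht, one_mul]
  set w := c ^ k with hw
  have hww : w * w = 1 := by
    rw [hw, ← pow_add, ← hk, hn, pow_orderOf_eq_one]
  have hw1 : w ≠ 1 := by
    intro h
    have hd := orderOf_dvd_of_pow_eq_one (hw ▸ h)
    rw [← hn] at hd
    exact absurd (Nat.le_of_dvd (Nat.pos_of_ne_zero hk0) hd) (not_le.mpr hkn)
  have hwinv : w⁻¹ = w := by
    rw [← mul_one w⁻¹, ← hww, ← mul_assoc, inv_mul_cancel, one_mul]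
  have htwt : t * w * t⁻¹ = w := by
    have h2 : t * w * t⁻¹ = (t * c * t⁻¹) ^ k := by rw [conj_pow]
    rw [h2, htct, inv_pow, ← hw, hwinv]
  by_cases hwt : w = t
  · -- then t ∈ ⟨c⟩, so c = c⁻¹, n = 2, k = 1, t' = 1; contradiction
    have hcomm_tc : t * c = c * t := by
      rw [← hwt, hw]; exact ((Commute.refl c).pow_left k).eq
    have hcc : c⁻¹ = c := by
      rw [← htct, hcomm_tc, mul_assoc, mul_inv_cancel, mul_one]
    have hcc1 : c * c = 1 := by nth_rewrite 1 [← hcc]; exact inv_mul_cancel c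
    have hdvd : n ∣ 2 := by
      rw [hn]; exact orderOf_dvd_of_pow_eq_one (by rw [pow_two]; exact hcc1)
    have hn2 : n = 2 := by
      rcases (Nat.dvd_prime Nat.prime_two).mp hdvd with h | h
      · omega
      · exact h
    have hk1 : k = 1 := by omega
    have htc : t = c := by rw [← hwt, hw, hk1, pow_one]
    exact h1' (mul_left_cancel (a := t) (by rw [mul_one, ← hc, ← htc]))
  · rw [mul_inv_eq_iff_eq_mul] at htwt
    exact aux_two_invol hind ht hww h1 hw1 (Ne.symm hwt) htwt
/-- In a subgroup all of whose elements have 2-power order, involutions are unique. -/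
lemma aux_invol_eq (hind : ∀ H : Subgroup G, Indecomposable H) {H : Subgroup G}
    (hH : ∀ x ∈ H, ∃ a : ℕ, orderOf x = 2 ^ a) {t t' : G}
    (htH : t ∈ H) (ht'H : t' ∈ H) (ht : t * t = 1) (ht' : t' * t' = 1)
    (h1 : t ≠ 1) (h1' : t' ≠ 1) : t = t' := by
  have hodd := aux_core hind ht ht' h1 h1'
  obtain ⟨a, ha⟩ := hH (t * t') (mul_mem htH ht'H)
  have ha0 : a = 0 := by
    by_contra h
    rw [ha] at hodd
    exact (Nat.not_odd_iff_even.mpr ((Nat.even_pow).mpr ⟨even_two, h⟩)) hodd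
  have : t * t' = 1 := orderOf_eq_one_iff.mp (by rw [ha, ha0, pow_zero])
  have htinv : t⁻¹ = t := by
    rw [← mul_one t⁻¹, ← ht, ← mul_assoc, inv_mul_cancel, one_mul]
  have h' : t' = t⁻¹ := by rw [eq_comm, inv_eq_iff_mul_eq_one]; exact this
  rw [h', htinv]

/-- Every element has 2-power order or odd order. -/
lemma aux_dichotomy (hind : ∀ H : Subgroup G, Indecomposable H) (x : G) :
    (∃ a : ℕ, orderOf x = 2 ^ a) ∨ Odd (orderOf x) := by
  set n := orderOf x with hn
  have hn0 : n ≠ 0 := (orderOf_pos x).ne'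
  by_cases h2 : 2 ∣ n
  swap
  · exact Or.inr (Nat.odd_iff.mpr (Nat.two_dvd_ne_zero.mp h2))
  set a := n.factorization 2 with hafact
  set s := n / 2 ^ a with hs
  have hps : 2 ^ a * s = n := Nat.ordProj_mul_ordCompl_eq_self n 2
  have hsodd : ¬ 2 ∣ s := Nat.not_dvd_ordCompl Nat.prime_two hn0
  by_cases hs1 : s = 1
  · exact Or.inl ⟨a, by rw [← hps, hs1, mul_one]⟩
  exfalso
  have ha1 : 1 ≤ a := (Nat.Prime.factorization_pos_of_dvd Nat.prime_two hn0 h2)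
  have hs0 : s ≠ 0 := by intro h; rw [h, mul_zero] at hps; exact hn0 hps.symm
  -- u has odd order s, t has order 2
  set u := x ^ (2 ^ a) with hu
  set t := x ^ (n / 2) with ht
  have hou : orderOf u = s := by
    rw [hu, orderOf_pow, ← hn, Nat.gcd_comm, Nat.gcd_eq_left ⟨s, hps.symm⟩, hs]
  have h2n : 2 * (n / 2) = n := Nat.mul_div_cancel' h2
  have htt : t * t = 1 := by
    rw [ht, ← pow_add, show n / 2 + n / 2 = n by omega, hn, pow_orderOf_eq_one]
  have ht1 : t ≠ 1 := by
    intro h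
    have h2' : x ^ (n / 2) = 1 := by rw [← ht]; exact h
    have hd := orderOf_dvd_of_pow_eq_one h2'
    rw [← hn] at hd
    have : n ≤ n / 2 := Nat.le_of_dvd (by omega) hd
    omega
  have hu1 : u ≠ 1 := by
    intro h
    rw [h, orderOf_one] at hou
    exact hs1 hou.symm
  refine aux_W hind hu1 ht1 ((Commute.refl x).pow_pow _ _) ?_
  intro w hwu hwt
  have hw1 : orderOf w ∣ s := hou ▸ orderOf_dvd_of_mem_zpowers hwu
  have hw2 : orderOf w ∣ 2 := by
    have := orderOf_dvd_of_mem_zpowers hwt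
    exact this.trans (orderOf_dvd_of_pow_eq_one (by rw [pow_two]; exact htt))
  rcases (Nat.dvd_prime Nat.prime_two).mp hw2 with h | h
  · exact orderOf_eq_one_iff.mp h
  · exact absurd (h ▸ hw1) hsodd

/-- A "thin" commutative p-subgroup is cyclic. -/
lemma aux_cyclic_pgroup (q : ℕ) (hq : q.Prime) (H : Subgroup G)
    (horder : ∀ x ∈ H, ∃ a : ℕ, orderOf x = q ^ a)
    (hcomm : ∀ x ∈ H, ∀ y ∈ H, Commute x y)
    (hthin : ∀ x ∈ H, ∀ y ∈ H, x ^ q = 1 → y ^ q = 1 → x ≠ 1 → y ∈ zpowers x) :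
    IsCyclic ↥H := by
  classical
  obtain ⟨x, hxS, hmax⟩ := Finset.exists_max_image
    (Finset.univ.filter (· ∈ H)) orderOf
    ⟨1, Finset.mem_filter.mpr ⟨Finset.mem_univ _, one_mem H⟩⟩
  have hxH : x ∈ H := (Finset.mem_filter.mp hxS).2
  obtain ⟨mx, hmx⟩ := horder x hxH
  have key : ∀ n : ℕ, ∀ y : G, y ∈ H → orderOf y = n → y ∈ zpowers x := by
    intro n
    induction n using Nat.strong_induction_on with
    | _ n IH =>
      intro y hyH hyn
      by_cases hy1 : y = 1
      · rw [hy1]; exact one_mem _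
      obtain ⟨b, hb⟩ := horder y hyH
      have hb1 : 1 ≤ b := by
        rcases Nat.eq_zero_or_pos b with h | h
        · rw [h, pow_zero] at hb; exact absurd (orderOf_eq_one_iff.mp hb) hy1
        · exact h
      have hbmx : b ≤ mx := by
        have hle : orderOf y ≤ orderOf x :=
          hmax y (Finset.mem_filter.mpr ⟨Finset.mem_univ _, hyH⟩)
        rw [hb, hmx] at hle
        exact (Nat.pow_le_pow_iff_right hq.one_lt).mp hle
      have hmx1 : 1 ≤ mx := le_trans hb1 hbmx
      -- order of y^q
      have hyq : orderOf (y ^ q) = q ^ (b - 1) := by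
        rw [orderOf_pow, hb, Nat.gcd_comm, Nat.gcd_eq_left (dvd_pow_self q (by omega)),
          ← Nat.pow_div hb1 hq.pos, Nat.pow_one]
      have hlt : q ^ (b - 1) < n := by
        rw [← hyn, hb]
        exact Nat.pow_lt_pow_right hq.one_lt (by omega)
      have hmem := IH _ hlt (y ^ q) (pow_mem hyH q) hyq
      obtain ⟨k, hk⟩ := (Submonoid.mem_powers_iff _ _).mp (mem_powers_iff_mem_zpowers.mpr hmem)
      -- q ∣ k
      have hxk : orderOf (x ^ k) = q ^ (b - 1) := by rw [hk, hyq]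
      have hgcd : Nat.gcd (q ^ mx) k = q ^ (mx - (b - 1)) := by
        have h1 : orderOf (x ^ k) = q ^ mx / Nat.gcd (q ^ mx) k := by
          rw [orderOf_pow, hmx]
        rw [hxk] at h1
        have hgdvd : Nat.gcd (q ^ mx) k ∣ q ^ mx := Nat.gcd_dvd_left _ _
        have hg0 : Nat.gcd (q ^ mx) k ≠ 0 := by
          intro h
          rw [h, Nat.div_zero] at h1
          exact (pow_ne_zero _ hq.pos.ne') h1
        have := Nat.div_mul_cancel hgdvd
        obtain ⟨c, hc, hgc⟩ := (Nat.dvd_prime_pow hq).mp hgdvd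
        rw [hgc, Nat.pow_div hc hq.pos] at h1
        have hcb : mx - c = b - 1 := Nat.pow_right_injective hq.two_le h1.symm
        rw [hgc]
        congr 1
        omega
      have hqk : q ∣ k := by
        have h1 : q ∣ Nat.gcd (q ^ mx) k := by
          rw [hgcd]
          exact dvd_pow_self q (by omega)
        exact h1.trans (Nat.gcd_dvd_right _ _)
      obtain ⟨k', hk'⟩ := hqk
      set w := y * (x ^ k')⁻¹ with hw
      have hcy : Commute y (x ^ k')⁻¹ := ((hcomm y hyH x hxH).pow_right k').inv_right
      have hwq : w ^ q = 1 := by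
        rw [hw, hcy.mul_pow, inv_pow, ← pow_mul, Nat.mul_comm k' q, ← hk', hk]
        exact mul_inv_cancel _
      have hwH : w ∈ H := mul_mem hyH (inv_mem (pow_mem hxH k'))
      by_cases hw1 : w = 1
      · have : y = x ^ k' := by
          rw [hw] at hw1
          exact (mul_inv_eq_one.mp hw1)
        rw [this]
        exact pow_mem (mem_zpowers x) k'
      · set x0 := x ^ (q ^ (mx - 1)) with hx0
        have hx0q : x0 ^ q = 1 := by
          rw [hx0, ← pow_mul, ← pow_succ, show mx - 1 + 1 = mx by omega, ← hmx,
            pow_orderOf_eq_one]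
        have hx01 : x0 ≠ 1 := by
          intro h
          have hd : orderOf x ∣ q ^ (mx - 1) := orderOf_dvd_of_pow_eq_one (by rw [← hx0]; exact h)
          rw [hmx] at hd
          have := Nat.le_of_dvd (pow_pos hq.pos _) hd
          have := Nat.pow_lt_pow_right hq.one_lt (show mx - 1 < mx by omega)
          omega
        have hwmem := hthin x0 (pow_mem hxH _) w hwH hx0q hwq hx01
        have hsub : zpowers x0 ≤ zpowers x := by
          rw [zpowers_le]
          exact pow_mem (mem_zpowers x) _
        have : y = w * x ^ k' := by rw [hw, mul_assoc, inv_mul_cancel, mul_one]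
        rw [this]
        exact mul_mem (hsub hwmem) (pow_mem (mem_zpowers x) k')
  refine ⟨⟨⟨x, hxH⟩, ?_⟩⟩
  intro u
  obtain ⟨k, hk⟩ := mem_zpowers_iff.mp (key (orderOf (u : G)) u u.2 rfl)
  exact mem_zpowers_iff.mpr ⟨k, by ext; simpa using hk⟩

/-- A commutative subgroup which is "thin" at every prime is cyclic. -/
lemma aux_cyclic_comm (H : Subgroup G)
    (hcomm : ∀ x ∈ H, ∀ y ∈ H, Commute x y)
    (hthin : ∀ q : ℕ, q.Prime → ∀ x ∈ H, ∀ y ∈ H,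
      x ^ q = 1 → y ^ q = 1 → x ≠ 1 → y ∈ zpowers x) :
    IsCyclic ↥H := by
  classical
  apply isCyclic_of_card_pow_eq_one_le
  intro n hn
  -- the n-torsion subgroup of H
  set T : Subgroup G :=
    { carrier := {x | x ∈ H ∧ x ^ n = 1}
      one_mem' := ⟨one_mem H, one_pow n⟩
      mul_mem' := by
        rintro x y ⟨hxH, hxn⟩ ⟨hyH, hyn⟩
        exact ⟨mul_mem hxH hyH, by rw [(hcomm x hxH y hyH).mul_pow, hxn, hyn, one_mul]⟩
      inv_mem' := by
        rintro x ⟨hxH, hxn⟩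
        exact ⟨inv_mem hxH, by rw [inv_pow, hxn, inv_one]⟩ } with hT
  have hTH : T ≤ H := fun x hx => hx.1
  have hcardeq : (Finset.univ.filter (fun a : ↥H => a ^ n = 1)).card = Nat.card ↥T := by
    rw [Nat.card_eq_fintype_card, ← Fintype.card_subtype]
    apply Fintype.card_congr
    refine ⟨fun a => ⟨(a : ↥H), ?_⟩, fun b => ⟨⟨(b : G), (b.2 : (b:G) ∈ T).1⟩, ?_⟩, ?_, ?_⟩
    · obtain ⟨⟨x, hxH⟩, hx⟩ := a
      exact ⟨hxH, by simpa using congrArg Subtype.val hx⟩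
    · obtain ⟨x, hxT⟩ := b
      have : x ^ n = 1 := (hxT : x ∈ T).2
      ext
      simp [this]
    · intro a; rfl
    · intro b; rfl
  rw [hcardeq]
  have hT0 : Nat.card ↥T ≠ 0 := Nat.card_pos.ne'
  refine Nat.le_of_dvd hn ?_
  rw [← Nat.factorization_le_iff_dvd hT0 hn.ne', Finsupp.le_def]
  intro p
  by_cases hp : p.Prime
  swap
  · simp [Nat.factorization_eq_zero_of_not_prime _ hp]
  haveI : Fact p.Prime := ⟨hp⟩
  obtain ⟨S⟩ : Nonempty (Sylow p ↥T) := inferInstance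
  set S' : Subgroup G := Subgroup.map T.subtype (S : Subgroup ↥T) with hS'
  have hS'T : S' ≤ T := by
    rintro _ ⟨s, hs, rfl⟩
    exact s.2
  have horder : ∀ x ∈ S', ∃ a : ℕ, orderOf x = p ^ a := by
    rintro _ ⟨s, hs, rfl⟩
    obtain ⟨k, hk⟩ := S.isPGroup' ⟨s, hs⟩
    have : (T.subtype s) ^ (p ^ k) = 1 := by
      have := congrArg (T.subtype ∘ ((S : Subgroup ↥T).subtype)) hk
      simpa using this
    obtain ⟨a, _, ha⟩ := (Nat.dvd_prime_pow hp).mp (orderOf_dvd_of_pow_eq_one this)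
    exact ⟨a, ha⟩
  have hcyc : IsCyclic ↥S' :=
    aux_cyclic_pgroup p hp S' horder
      (fun x hx y hy => hcomm x (hTH (hS'T hx)) y (hTH (hS'T hy)))
      (fun x hx y hy => hthin p hp x (hTH (hS'T hx)) y (hTH (hS'T hy)))
  obtain ⟨g, hg⟩ := hcyc.exists_generator
  have hord : orderOf g = Nat.card ↥S' := orderOf_eq_card_of_forall_mem_zpowers hg
  have hcardS : Nat.card ↥S' = p ^ (Nat.card ↥T).factorization p := by
    rw [← S.card_eq_multiplicity]
    exact (Nat.card_congr ((S : Subgroup ↥T).equivMapOfInjective T.subtype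
      (Subtype.coe_injective)).toEquiv).symm
  have hgn : ((g : G)) ^ n = 1 := (hS'T g.2).2
  have hdvd : p ^ (Nat.card ↥T).factorization p ∣ n := by
    have h1 : orderOf (g : G) = orderOf g := orderOf_injective S'.subtype Subtype.coe_injective g
    have h2 : orderOf (g : G) ∣ n := orderOf_dvd_of_pow_eq_one hgn
    rw [h1, hord, hcardS] at h2
    exact h2
  exact (Nat.Prime.pow_dvd_iff_le_factorization hp hn.ne').mp hdvd

end aux

lemma aux_mulAut_comm {H : Type*} [Group H] (hc : IsCyclic H) (σ τ : MulAut H) :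
    σ * τ = τ * σ := by
  obtain ⟨c, hgen⟩ := hc.exists_generator
  obtain ⟨i, hi⟩ := mem_zpowers_iff.mp (hgen (σ c))
  obtain ⟨j, hj⟩ := mem_zpowers_iff.mp (hgen (τ c))
  ext a
  obtain ⟨k, hk⟩ := mem_zpowers_iff.mp (hgen a)
  have h1 : ∀ (ρ : MulAut H) (l : ℤ), ρ (c ^ l) = (ρ c) ^ l := fun ρ l => map_zpow ρ c l
  calc (σ * τ) a = σ (τ (c ^ k)) := by rw [MulAut.mul_apply, hk]
    _ = c ^ (i * (j * k)) := by rw [h1 τ, ← hj, ← zpow_mul, h1 σ, ← hi, ← zpow_mul]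
    _ = c ^ (j * (i * k)) := by ring_nf
    _ = (τ * σ) a := by rw [MulAut.mul_apply, ← hk, h1 σ, ← hi, ← zpow_mul, h1 τ, ← hj, ← zpow_mul]


/-- If all subgroups of the finite group `G` are indecomposable and `G` is
not a `p`-group, then the Sylow `2`-subgroups of `G` are cyclic (in
particular, not generalized quaternion). -/
theorem stmt_17 (G : Type) [Group G] [Fintype G]
    (hind : ∀ H : Subgroup G, Indecomposable H)
    (hnp : ¬ ∃ p : ℕ, p.Prime ∧ IsPGroup p G)
    (P : Sylow 2 G) : IsCyclic (P : Subgroup G) := by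
  classical
  by_cases hPtriv : Subsingleton ↥(P : Subgroup G)
  · exact @isCyclic_of_subsingleton _ _ hPtriv
  haveI hnt : Nontrivial ↥(P : Subgroup G) := not_subsingleton_iff_nontrivial.mp hPtriv
  haveI : Fact (Nat.Prime 2) := ⟨Nat.prime_two⟩
  have hord2 : ∀ K : Subgroup G, IsPGroup 2 ↥K → ∀ x ∈ K, ∃ a : ℕ, orderOf x = 2 ^ a := by
    intro K hK x hx
    obtain ⟨k, hk⟩ := hK ⟨x, hx⟩
    have hk' : x ^ 2 ^ k = 1 := by simpa using congrArg Subtype.val hk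
    obtain ⟨a, _, ha⟩ := (Nat.dvd_prime_pow Nat.prime_two).mp (orderOf_dvd_of_pow_eq_one hk')
    exact ⟨a, ha⟩
  have hPord : ∀ x ∈ (P : Subgroup G), ∃ a : ℕ, orderOf x = 2 ^ a :=
    hord2 _ P.isPGroup'
  -- an involution z in P
  obtain ⟨z0, hz0⟩ : ∃ x : ↥(P : Subgroup G), orderOf x = 2 := by
    apply exists_prime_orderOf_dvd_card 2
    obtain ⟨n, hn⟩ := IsPGroup.iff_card.mp P.isPGroup'
    rw [Nat.card_eq_fintype_card] at hn
    rcases Nat.eq_zero_or_pos n with h | h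
    · rw [h, pow_zero] at hn
      have := Fintype.one_lt_card_iff_nontrivial.mpr hnt
      omega
    · rw [hn]; exact dvd_pow_self 2 h.ne'
  set z : G := (z0 : G) with hzdef
  have hzP : z ∈ (P : Subgroup G) := z0.2
  have hzord : orderOf z = 2 :=
    (orderOf_injective (P : Subgroup G).subtype Subtype.coe_injective z0).trans hz0
  have hz1 : z ≠ 1 := by
    intro h; rw [h, orderOf_one] at hzord; omega
  have hzz : z * z = 1 := by
    rw [← pow_two, ← hzord, pow_orderOf_eq_one]
  have hzinv : z⁻¹ = z := by
    rw [← mul_one z⁻¹, ← hzz, ← mul_assoc, inv_mul_cancel, one_mul]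
  -- unique involutions
  have huniq : ∀ K : Subgroup G, (∀ x ∈ K, ∃ a : ℕ, orderOf x = 2 ^ a) →
      ∀ s ∈ K, s * s = 1 → s ≠ 1 → ∀ t ∈ K, t * t = 1 → t ≠ 1 → t = s := by
    intro K hK s hsK hss hs1 t htK htt ht1
    exact aux_invol_eq hind hK htK hsK htt hss ht1 hs1
  have hzcentral : ∀ p ∈ (P : Subgroup G), p * z = z * p := by
    intro p hp
    have hmem : p * z * p⁻¹ ∈ (P : Subgroup G) := mul_mem (mul_mem hp hzP) (inv_mem hp)
    have h1 : (p * z * p⁻¹) * (p * z * p⁻¹) = 1 := by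
      have e : (p * z * p⁻¹) * (p * z * p⁻¹) = p * (z * z) * p⁻¹ := by group
      rw [e, hzz, mul_one, mul_inv_cancel]
    have h2 : p * z * p⁻¹ ≠ 1 := by
      intro h
      have e : z = p⁻¹ * (p * z * p⁻¹) * p := by group
      rw [h] at e
      rw [mul_one, inv_mul_cancel] at e
      exact hz1 e
    have h3 : p * z * p⁻¹ = z := huniq _ hPord z hzP hzz hz1 _ hmem h1 h2
    have e2 : p * z = (p * z * p⁻¹) * p := by group
    rw [h3] at e2
    exact e2
  have hconjz : ∀ p ∈ (P : Subgroup G), p * z * p⁻¹ = z := by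
    intro p hp
    rw [hzcentral p hp, mul_assoc, mul_inv_cancel, mul_one]
  -- centralizer of z is P
  have hPle : (P : Subgroup G) ≤ centralizer {z} := by
    intro p hp
    rw [mem_centralizer_iff]
    rintro h hh
    rw [Set.mem_singleton_iff] at hh; subst hh
    exact (hzcentral p hp).symm
  have hCz : centralizer {z} = (P : Subgroup G) := by
    refine P.is_maximal' ?_ hPle
    intro u
    rcases aux_dichotomy hind (u : G) with ⟨a, ha⟩ | hodd
    · refine ⟨a, ?_⟩
      have : (u : G) ^ 2 ^ a = 1 := by rw [← ha, pow_orderOf_eq_one]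
      ext
      simpa using this
    · by_cases hu1 : (u : G) = 1
      · exact ⟨0, by simpa using Subtype.ext hu1⟩
      exfalso
      have hcom : Commute z (u : G) := mem_centralizer_iff.mp u.2 z rfl
      refine aux_W hind hz1 hu1 hcom ?_
      intro w hwz hwu
      have h2 : orderOf w ∣ 2 := hzord ▸ orderOf_dvd_of_mem_zpowers hwz
      have h3 : orderOf w ∣ orderOf (u : G) := orderOf_dvd_of_mem_zpowers hwu
      rcases (Nat.dvd_prime Nat.prime_two).mp h2 with h | h
      · exact orderOf_eq_one_iff.mp h
      · exfalso
        obtain ⟨c, hc⟩ := h ▸ h3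
        rw [Nat.odd_iff] at hodd
        omega
  -- the quotient by P
  haveI : Fintype (G ⧸ (P : Subgroup G)) := Fintype.ofFinite _
  set m := Fintype.card (G ⧸ (P : Subgroup G)) with hm
  have hcardG : Fintype.card G = Nat.card ↥(P : Subgroup G) * m := by
    have h := Subgroup.card_mul_index (P : Subgroup G)
    rw [Subgroup.index_eq_card] at h
    rw [hm, ← Nat.card_eq_fintype_card (α := G ⧸ (P : Subgroup G)), h,
      Nat.card_eq_fintype_card]
  have hm1 : 1 < m := by
    rcases Nat.lt_or_ge 1 m with h | h
    · exact h
    exfalso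
    have hm0 : 0 < m := Fintype.card_pos
    have hidx : (P : Subgroup G).index = 1 := by
      rw [Subgroup.index_eq_card, Nat.card_eq_fintype_card, ← hm]; omega
    obtain ⟨n, hn⟩ := IsPGroup.iff_card.mp P.isPGroup'
    refine hnp ⟨2, Nat.prime_two, IsPGroup.iff_card.mpr ⟨n, ?_⟩⟩
    rw [← Subgroup.card_mul_index (P : Subgroup G), hidx, mul_one, hn]
  -- the map  gP ↦ g z g⁻¹
  let F : G ⧸ (P : Subgroup G) → G := fun τ =>
    Quotient.liftOn' τ (fun g => g * z * g⁻¹) (by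
      intro g1 g2 hrel
      have hmem : g1⁻¹ * g2 ∈ (P : Subgroup G) := QuotientGroup.leftRel_apply.mp hrel
      have h1 := hconjz _ hmem
      have h2 : g2 * z * g2⁻¹ = g1 * ((g1⁻¹ * g2) * z * (g1⁻¹ * g2)⁻¹) * g1⁻¹ := by group
      rw [h1] at h2
      exact h2.symm)
  have hFmk : ∀ g : G, F (QuotientGroup.mk g) = g * z * g⁻¹ := fun g => rfl
  have hFinvol : ∀ τ, F τ * F τ = 1 := by
    intro τ
    induction τ using Quotient.inductionOn' with
    | h g =>
      show (g * z * g⁻¹) * (g * z * g⁻¹) = 1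
      have e : (g * z * g⁻¹) * (g * z * g⁻¹) = g * (z * z) * g⁻¹ := by group
      rw [e, hzz, mul_one, mul_inv_cancel]
  have hFne : ∀ τ, F τ ≠ 1 := by
    intro τ
    induction τ using Quotient.inductionOn' with
    | h g =>
      intro h
      have h' : g * z * g⁻¹ = 1 := h
      have e : z = g⁻¹ * (g * z * g⁻¹) * g := by group
      rw [h', mul_one, inv_mul_cancel] at e
      exact hz1 e
  have hFinj : Function.Injective F := by
    intro τ1 τ2 h
    induction τ1 using Quotient.inductionOn' with
    | h g1 =>
    induction τ2 using Quotient.inductionOn' with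
    | h g2 =>
      have h' : g1 * z * g1⁻¹ = g2 * z * g2⁻¹ := h
      apply Quotient.sound'
      rw [QuotientGroup.leftRel_apply, ← hCz, mem_centralizer_iff]
      rintro w hw
      rw [Set.mem_singleton_iff] at hw; subst hw
      have h3 : (g1⁻¹ * g2) * z * (g1⁻¹ * g2)⁻¹ = g1⁻¹ * (g2 * z * g2⁻¹) * g1 := by group
      rw [← h'] at h3
      have h4 : g1⁻¹ * (g1 * z * g1⁻¹) * g1 = z := by group
      rw [h4] at h3
      have h5 : (g1⁻¹ * g2) * z = ((g1⁻¹ * g2) * z * (g1⁻¹ * g2)⁻¹) * (g1⁻¹ * g2) := by group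
      rw [h3] at h5
      exact h5.symm
  -- conjugates of P as centralizers
  have hK : ∀ g : G, centralizer {(g * z * g⁻¹ : G)} =
      Subgroup.map (MulAut.conj g).toMonoidHom (P : Subgroup G) := by
    intro g; ext x
    rw [mem_centralizer_iff]
    constructor
    · intro hx
      have h1 : (g * z * g⁻¹) * x = x * (g * z * g⁻¹) := hx _ rfl
      have h2 : g⁻¹ * x * g ∈ centralizer {z} := by
        rw [mem_centralizer_iff]
        rintro w hw
        rw [Set.mem_singleton_iff] at hw; subst hw
        have h3 : z * (g⁻¹ * x * g) = g⁻¹ * ((g * z * g⁻¹) * x) * g := by group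
        rw [h1] at h3
        have h4 : g⁻¹ * (x * (g * z * g⁻¹)) * g = (g⁻¹ * x * g) * z := by group
        rw [h4] at h3
        exact h3
      rw [hCz] at h2
      refine ⟨g⁻¹ * x * g, h2, ?_⟩
      simp only [MulEquiv.coe_toMonoidHom, MulAut.conj_apply]
      group
    · rintro ⟨y, hy, rfl⟩
      rintro w hw
      rw [Set.mem_singleton_iff] at hw; subst hw
      simp only [MulEquiv.coe_toMonoidHom, MulAut.conj_apply]
      have h1 : y * z = z * y := hzcentral y hy
      have h2 : (g * z * g⁻¹) * (g * y * g⁻¹) = g * (z * y) * g⁻¹ := by group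
      have h3 : (g * y * g⁻¹) * (g * z * g⁻¹) = g * (y * z) * g⁻¹ := by group
      rw [h2, h3, h1]
  let K : G ⧸ (P : Subgroup G) → Subgroup G := fun τ => centralizer {F τ}
  have hKmk : ∀ g : G, K (QuotientGroup.mk g) =
      Subgroup.map (MulAut.conj g).toMonoidHom (P : Subgroup G) := fun g => hK g
  have hKord : ∀ τ, ∀ x ∈ K τ, ∃ a : ℕ, orderOf x = 2 ^ a := by
    intro τ
    induction τ using Quotient.inductionOn' with
    | h g =>
      intro x hx
      have hx' : x ∈ Subgroup.map (MulAut.conj g).toMonoidHom (P : Subgroup G) := by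
        rw [← hKmk g]; exact hx
      exact hord2 _ (P.isPGroup'.map _) x hx'
  have hKcard : ∀ τ, Nat.card ↥(K τ) = Nat.card ↥(P : Subgroup G) := by
    intro τ
    induction τ using Quotient.inductionOn' with
    | h g =>
      rw [hKmk g]
      exact (Nat.card_congr ((P : Subgroup G).equivMapOfInjective _
        (MulAut.conj g).injective).toEquiv).symm
  have hFK : ∀ τ, F τ ∈ K τ := by
    intro τ
    rw [mem_centralizer_iff]
    rintro w hw
    rw [Set.mem_singleton_iff] at hw; subst hw; rfl
  have hKuniq : ∀ τ, ∀ t ∈ K τ, t * t = 1 → t ≠ 1 → t = F τ :=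
    fun τ t ht htt ht1 =>
      huniq (K τ) (hKord τ) (F τ) (hFK τ) (hFinvol τ) (hFne τ) t ht htt ht1
  -- involution extraction from a nontrivial 2-element
  have hhalf : ∀ x : G, x ≠ 1 → (∃ a : ℕ, orderOf x = 2 ^ a) →
      (x ^ (2 ^ ((orderOf x).factorization 2 - 1))) * (x ^ (2 ^ ((orderOf x).factorization 2 - 1))) = 1 ∧
      x ^ (2 ^ ((orderOf x).factorization 2 - 1)) ≠ 1 := by
    intro x hx1 ⟨a, ha⟩
    have ha' : (orderOf x).factorization 2 = a := by
      rw [ha, Nat.Prime.factorization_pow Nat.prime_two, Finsupp.single_eq_same]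
    have hane : a ≠ 0 := by
      intro h
      rw [h, pow_zero] at ha
      exact hx1 (orderOf_eq_one_iff.mp ha)
    rw [ha']
    constructor
    · rw [← pow_add]
      have e : 2 ^ (a - 1) + 2 ^ (a - 1) = 2 ^ a := by
        rw [← two_mul, ← pow_succ']
        congr 1
        omega
      rw [e, ← ha, pow_orderOf_eq_one]
    · intro h
      have hd : orderOf x ∣ 2 ^ (a - 1) := orderOf_dvd_of_pow_eq_one h
      rw [ha] at hd
      have h1 := Nat.le_of_dvd (Nat.pow_pos (by norm_num)) hd
      have h2 : (2 : ℕ) ^ (a - 1) < 2 ^ a := Nat.pow_lt_pow_right one_lt_two (by omega)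
      omega
  -- counting
  set Od : Finset G := Finset.univ.filter (fun x => Odd (orderOf x)) with hOd
  set Ev : Finset G := Finset.univ.filter (fun x => ¬ Odd (orderOf x)) with hEv
  have hsplit : Od.card + Ev.card = Fintype.card G := by
    rw [hOd, hEv]
    exact Finset.card_filter_add_card_filter_not _
  set B : G ⧸ (P : Subgroup G) → Finset G :=
    (fun τ => Finset.univ.filter (fun x => x ∈ K τ ∧ x ≠ 1)) with hB
  have hBcard : ∀ τ, (B τ).card = Nat.card ↥(P : Subgroup G) - 1 := by
    intro τ
    have h1 : B τ = (Finset.univ.filter (fun x => x ∈ K τ)).erase 1 := by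
      ext x
      simp only [hB, Finset.mem_filter, Finset.mem_erase, Finset.mem_univ, true_and]
      tauto
    rw [h1, Finset.card_erase_of_mem (by simp [one_mem]), ← hKcard τ,
      Nat.card_eq_fintype_card, Fintype.card_subtype]
  have hBsub : ∀ τ, B τ ⊆ Ev := by
    intro τ x hx
    rw [hB] at hx
    simp only [Finset.mem_filter, Finset.mem_univ, true_and] at hx
    obtain ⟨hxK, hx1⟩ := hx
    obtain ⟨a, ha⟩ := hKord τ x hxK
    have hane : a ≠ 0 := by
      intro h
      rw [h, pow_zero] at ha
      exact hx1 (orderOf_eq_one_iff.mp ha)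
    rw [hEv]
    simp only [Finset.mem_filter, Finset.mem_univ, true_and]
    rw [ha, Nat.odd_iff]
    intro hcon
    have : 2 ∣ 2 ^ a := dvd_pow_self 2 hane
    omega
  have hBdisj : ∀ τ ∈ (Finset.univ : Finset (G ⧸ (P : Subgroup G))),
      ∀ τ' ∈ (Finset.univ : Finset (G ⧸ (P : Subgroup G))), τ ≠ τ' →
      Disjoint (B τ) (B τ') := by
    intro τ _ τ' _ hne
    rw [Finset.disjoint_left]
    intro x hx hx'
    rw [hB] at hx hx'
    simp only [Finset.mem_filter, Finset.mem_univ, true_and] at hx hx'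
    obtain ⟨hxK, hx1⟩ := hx
    obtain ⟨hxK', _⟩ := hx'
    obtain ⟨hw2, hwne⟩ := hhalf x hx1 (hKord τ x hxK)
    set w := x ^ (2 ^ ((orderOf x).factorization 2 - 1)) with hw
    have hwτ : w = F τ := hKuniq τ w (pow_mem hxK _) hw2 hwne
    have hwτ' : w = F τ' := hKuniq τ' w (pow_mem hxK' _) hw2 hwne
    exact hne (hFinj (hwτ ▸ hwτ'))
  have hEvge : m * (Nat.card ↥(P : Subgroup G) - 1) ≤ Ev.card := by
    have hsub : (Finset.univ : Finset (G ⧸ (P : Subgroup G))).biUnion B ⊆ Ev := by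
      intro x hx
      obtain ⟨τ, -, hxB⟩ := Finset.mem_biUnion.mp hx
      exact hBsub τ hxB
    calc m * (Nat.card ↥(P : Subgroup G) - 1)
        = ∑ τ : G ⧸ (P : Subgroup G), (B τ).card := by
          rw [Finset.sum_congr rfl (fun τ _ => hBcard τ), Finset.sum_const, smul_eq_mul, hm,
            Finset.card_univ]
      _ = ((Finset.univ : Finset (G ⧸ (P : Subgroup G))).biUnion B).card :=
          (Finset.card_biUnion hBdisj).symm
      _ ≤ Ev.card := Finset.card_le_card hsub
  set ZI : Finset G := Finset.univ.image (fun τ => z * F τ) with hZI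
  have hZIcard : ZI.card = m := by
    rw [hZI, Finset.card_image_of_injective _
      (fun τ1 τ2 h => hFinj (mul_left_cancel h)), Finset.card_univ, hm]
  have hZIsub : ZI ⊆ Od := by
    intro x hx
    obtain ⟨τ, -, rfl⟩ := Finset.mem_image.mp hx
    rw [hOd]
    simp only [Finset.mem_filter, Finset.mem_univ, true_and]
    exact aux_core hind hzz (hFinvol τ) hz1 (hFne τ)
  have hOdle : Od.card ≤ m := by
    have h4 : m * (Nat.card ↥(P : Subgroup G) - 1) + m = Nat.card ↥(P : Subgroup G) * m := by
      have hcP1 : 1 ≤ Nat.card ↥(P : Subgroup G) := Nat.card_pos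
      obtain ⟨c', hc'⟩ : ∃ c', Nat.card ↥(P : Subgroup G) = c' + 1 :=
        ⟨Nat.card ↥(P : Subgroup G) - 1, by omega⟩
      rw [hc']
      simp only [Nat.add_sub_cancel]
      ring
    have h5 : Od.card + (m * (Nat.card ↥(P : Subgroup G) - 1)) ≤ Od.card + Ev.card :=
      Nat.add_le_add_left hEvge _
    rw [hsplit, hcardG, ← h4] at h5
    omega
  have hODeq : ZI = Od :=
    Finset.eq_of_subset_of_card_le hZIsub (by rw [hZIcard]; exact hOdle)
  have hrep : ∀ u : G, Odd (orderOf u) → ∃ τ, z * F τ = u := by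
    intro u hu
    have hmem : u ∈ Od := by
      rw [hOd]; simp only [Finset.mem_filter, Finset.mem_univ, true_and]; exact hu
    rw [← hODeq] at hmem
    obtain ⟨τ, -, h⟩ := Finset.mem_image.mp hmem
    exact ⟨τ, h⟩
  -- odd elements form a subgroup
  have hmulodd : ∀ u v : G, Odd (orderOf u) → Odd (orderOf v) → Odd (orderOf (u * v)) := by
    intro u v hu hv
    obtain ⟨τ1, h1⟩ := hrep u hu
    obtain ⟨τ2, h2⟩ := hrep v hv
    set s := z * F τ1 * z with hs
    have hss : s * s = 1 := by
      have e1 : s * s = z * (F τ1 * (z * z) * F τ1) * z := by rw [hs]; group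
      rw [hzz, mul_one, hFinvol τ1, mul_one, hzz] at e1
      exact e1
    have hs1 : s ≠ 1 := by
      intro h
      have e2 : F τ1 = z⁻¹ * s * z⁻¹ := by rw [hs]; group
      rw [h, hzinv, mul_one, hzz] at e2
      exact hFne τ1 e2
    have e3 : u * v = s * F τ2 := by rw [← h1, ← h2, hs]; group
    rw [e3]
    exact aux_core hind hss (hFinvol τ2) hs1 (hFne τ2)
  set O : Subgroup G :=
    { carrier := {u | Odd (orderOf u)}
      one_mem' := ⟨0, by simp⟩
      mul_mem' := fun ha hb => hmulodd _ _ ha hb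
      inv_mem' := fun h => by simpa [orderOf_inv] using h } with hO
  have hOmem : ∀ u : G, u ∈ O ↔ Odd (orderOf u) := fun u => Iff.rfl
  have hinvert : ∀ u ∈ O, z * u * z = u⁻¹ := by
    intro u hu
    obtain ⟨τ, h1⟩ := hrep u ((hOmem u).mp hu)
    have hFinv : (F τ)⁻¹ = F τ := by
      rw [← mul_one (F τ)⁻¹, ← hFinvol τ, ← mul_assoc, inv_mul_cancel, one_mul]
    rw [← h1, mul_inv_rev, hzinv, hFinv]
    have e : z * (z * F τ) * z = (z * z) * (F τ * z) := by group
    rw [e, hzz, one_mul]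
  have hOcomm : ∀ u ∈ O, ∀ v ∈ O, Commute u v := by
    intro u hu v hv
    have huv : u * v ∈ O := mul_mem hu hv
    have e1 := hinvert _ huv
    have e2 : (z * u * z) * (z * v * z) = z * (u * v) * z := by
      have e : (z * u * z) * (z * v * z) = z * (u * (z * z) * v) * z := by group
      rw [e, hzz, mul_one]
    rw [hinvert u hu, hinvert v hv] at e2
    rw [e1, mul_inv_rev] at e2
    have e3 : Commute u⁻¹ v⁻¹ := e2
    have e4 := e3.inv_inv
    simpa using e4
  haveI hONormal : O.Normal := by
    constructor
    intro u hu g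
    show Odd (orderOf (g * u * g⁻¹))
    have e : orderOf (g * u * g⁻¹) = orderOf u := by
      simpa [MulAut.conj_apply] using
        orderOf_injective (MulAut.conj g).toMonoidHom
          (fun a b hab => (MulAut.conj g).injective hab) u
    rw [e]
    exact hu
  have hOcard : Nat.card ↥O = m := by
    rw [Nat.card_eq_fintype_card, Fintype.card_subtype]
    have : (Finset.univ.filter (fun x => x ∈ O)) = Od := by
      ext x
      rw [hOd]
      simp only [Finset.mem_filter, Finset.mem_univ, true_and]
      exact hOmem x
    rw [this, ← hODeq, hZIcard]
  haveI hOnt : Nontrivial ↥O := Finite.one_lt_card_iff_nontrivial.mp (by rw [hOcard]; exact hm1)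
  obtain ⟨u0, hu0ne⟩ := exists_ne (1 : ↥O)
  have hu0G : (u0 : G) ∈ O := u0.2
  have hu0ne' : (u0 : G) ≠ 1 := fun h => hu0ne (Subtype.ext h)
  -- O is cyclic
  have hOthin : ∀ q : ℕ, q.Prime → ∀ x ∈ O, ∀ y ∈ O,
      x ^ q = 1 → y ^ q = 1 → x ≠ 1 → y ∈ zpowers x := by
    intro q hq x hx y hy hxq hyq hx1
    by_cases hy1 : y = 1
    · rw [hy1]; exact one_mem _
    by_contra hyz
    refine aux_W hind hx1 hy1 (hOcomm x hx y hy) ?_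
    intro w hwx hwy
    by_contra hw1
    haveI : Fact q.Prime := ⟨hq⟩
    have hqx : orderOf x = q := orderOf_eq_prime hxq hx1
    have hqy : orderOf y = q := orderOf_eq_prime hyq hy1
    have hwdx : orderOf w ∣ q := hqx ▸ orderOf_dvd_of_mem_zpowers hwx
    have hwq : orderOf w = q := by
      rcases (Nat.dvd_prime hq).mp hwdx with h | h
      · exact absurd (orderOf_eq_one_iff.mp h) hw1
      · exact h
    have hsetx : (zpowers w : Set G) = (zpowers x : Set G) := by
      apply Set.eq_of_subset_of_ncard_le
      · exact SetLike.coe_subset_coe.mpr (zpowers_le.mpr hwx)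
      · rw [← Nat.card_coe_set_eq, ← Nat.card_coe_set_eq]
        simp only [SetLike.coe_sort_coe]
        rw [Nat.card_zpowers, Nat.card_zpowers, hwq, hqx]
      · exact Set.toFinite _
    have hsety : (zpowers w : Set G) = (zpowers y : Set G) := by
      apply Set.eq_of_subset_of_ncard_le
      · exact SetLike.coe_subset_coe.mpr (zpowers_le.mpr hwy)
      · rw [← Nat.card_coe_set_eq, ← Nat.card_coe_set_eq]
        simp only [SetLike.coe_sort_coe]
        rw [Nat.card_zpowers, Nat.card_zpowers, hwq, hqy]
      · exact Set.toFinite _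
    apply hyz
    have : (zpowers x : Set G) = (zpowers y : Set G) := by rw [← hsetx, hsety]
    have hxy : zpowers x = zpowers y := SetLike.coe_injective this
    rw [hxy]
    exact mem_zpowers y
  have hOcyc : IsCyclic ↥O := aux_cyclic_comm O hOcomm hOthin
  -- conjugation action of P on O
  set φ : ↥(P : Subgroup G) →* MulAut ↥O := MulAut.conjNormal.comp (P : Subgroup G).subtype
    with hφ
  have hφinj : Function.Injective φ := by
    rw [injective_iff_map_eq_one]
    rintro ⟨x, hxP⟩ hx1
    rw [Subtype.ext_iff]
    by_contra hxne
    have hcent : ∀ u ∈ O, x * u * x⁻¹ = u := by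
      intro u hu
      have e := congrArg (fun σ : MulAut ↥O => ((σ ⟨u, hu⟩ : ↥O) : G)) hx1
      simpa [hφ, MulAut.conjNormal_apply] using e
    have hcx : ∀ u ∈ O, Commute x u := by
      intro u hu
      have e := hcent u hu
      have e2 : x * u = (x * u * x⁻¹) * x := by group
      rw [e] at e2
      exact e2
    obtain ⟨hw2, hwne⟩ := hhalf x hxne (hPord x hxP)
    set w := x ^ (2 ^ ((orderOf x).factorization 2 - 1)) with hw
    have hwP : w ∈ (P : Subgroup G) := pow_mem hxP _
    have hwz : w = z := huniq _ hPord z hzP hzz hz1 w hwP hw2 hwne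
    have hwcent : z * (u0 : G) * z = (u0 : G) := by
      have hc := ((hcx (u0 : G) hu0G).pow_left (2 ^ ((orderOf x).factorization 2 - 1)))
      rw [← hw] at hc
      have hinv2 : w⁻¹ = w := by
        rw [← mul_one w⁻¹, ← hw2, ← mul_assoc, inv_mul_cancel, one_mul]
      have e2 : w * (u0 : G) * w⁻¹ = (u0 : G) := by
        rw [hc.eq, mul_assoc, mul_inv_cancel, mul_one]
      rw [hinv2] at e2
      rw [← hwz]
      exact e2
    have e1 := hinvert _ hu0G
    have e3 : (u0 : G)⁻¹ = (u0 : G) := by rw [← e1, hwcent]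
    have e4 : (u0 : G) * (u0 : G) = 1 := by
      nth_rewrite 2 [← e3]
      exact mul_inv_cancel _
    have e5 : orderOf (u0 : G) ∣ 2 := orderOf_dvd_of_pow_eq_one (by rw [pow_two]; exact e4)
    have hodd : Odd (orderOf (u0 : G)) := (hOmem _).mp hu0G
    rcases (Nat.dvd_prime Nat.prime_two).mp e5 with h | h
    · exact hu0ne' (orderOf_eq_one_iff.mp h)
    · rw [h] at hodd
      exact (by decide : ¬ Odd 2) hodd
  have hPcomm : ∀ x ∈ (P : Subgroup G), ∀ y ∈ (P : Subgroup G), Commute x y := by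
    intro x hx y hy
    have h1 : φ (⟨x, hx⟩ * ⟨y, hy⟩) = φ (⟨y, hy⟩ * ⟨x, hx⟩) := by
      rw [map_mul, map_mul, aux_mulAut_comm hOcyc]
    have h2 := hφinj h1
    exact congrArg Subtype.val h2
  have hPthin : ∀ x ∈ (P : Subgroup G), ∀ y ∈ (P : Subgroup G),
      x ^ 2 = 1 → y ^ 2 = 1 → x ≠ 1 → y ∈ zpowers x := by
    intro x hx y hy hx2 hy2 hx1
    have hxz : x = z := huniq _ hPord z hzP hzz hz1 x hx (by rw [← pow_two]; exact hx2) hx1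
    by_cases hy1 : y = 1
    · rw [hy1]; exact one_mem _
    have hyz : y = z := huniq _ hPord z hzP hzz hz1 y hy (by rw [← pow_two]; exact hy2) hy1
    rw [hyz, ← hxz]
    exact mem_zpowers x
  exact aux_cyclic_pgroup 2 Nat.prime_two _ hPord hPcomm hPthin
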